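/- Let u: B → ℝ be a bounded subharmonic function on a ball B = B(w₀, R) ⊂ ℝ^{2n} ≅ ℂⁿ and μ a Borel measure on B that is comparable to Lebesgue measure up to a factor (1 ± Cδ) with Cδ < 1/2. Then the mean value over B with respect to μ satisfies (1/μ(B)) ∫_B u dμ ≥ u(w₀) - C'·δ·osc_B(u) for a constant C' depending only on n and C. -/

import Mathlib

open MeasureTheory Metric

/-- Perturbed mean-value inequality for a bounded subharmonic function (characterized by
the sub-mean value property on balls), with respect to a measure comparable to Lebesgue
measure up to factors 1 ± Cδ. -/
theorem stmt_11 (n : ℕ) (hn : 1 ≤ n) (C : ℝ) (hC : 0 < C) :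
    ∃ C' > 0, ∀ (δ R : ℝ), 0 < δ → C * δ < 1/2 → 0 < R →
      ∀ (w₀ : EuclideanSpace ℝ (Fin (2 * n))) (u : EuclideanSpace ℝ (Fin (2 * n)) → ℝ),
      (∃ M, ∀ x ∈ ball w₀ R, |u x| ≤ M) →
      (∀ r : ℝ, 0 < r → r ≤ R → u w₀ ≤ ⨍ x in ball w₀ r, u x) →
      ∀ μ : Measure (EuclideanSpace ℝ (Fin (2 * n))),
      (∀ s : Set (EuclideanSpace ℝ (Fin (2 * n))), MeasurableSet s → s ⊆ ball w₀ R →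
        ENNReal.ofReal (1 - C * δ) * volume s ≤ μ s ∧
          μ s ≤ ENNReal.ofReal (1 + C * δ) * volume s) →
      IntegrableOn u (ball w₀ R) μ →
      (μ (ball w₀ R)).toReal⁻¹ * ∫ x in ball w₀ R, u x ∂μ ≥
        u w₀ - C' * δ * (sSup (u '' ball w₀ R) - sInf (u '' ball w₀ R)) := by
  refine ⟨4 * C, by positivity, ?_⟩
  intro δ R hδ hCδ hR w₀ u hbdd hsub μ hμ hint
  obtain ⟨M, hM⟩ := hbdd
  set B := ball w₀ R with hBdef
  have hBm : MeasurableSet B := measurableSet_ball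
  have hw₀ : w₀ ∈ B := mem_ball_self hR
  set t := C * δ with htdef
  have ht0 : 0 < t := by positivity
  have ht1 : (0:ℝ) < 1 - t := by linarith
  have hbb : BddBelow (u '' B) := ⟨-M, by rintro _ ⟨x, hx, rfl⟩; linarith [(abs_le.1 (hM x hx)).1]⟩
  have hba : BddAbove (u '' B) := ⟨M, by rintro _ ⟨x, hx, rfl⟩; linarith [(abs_le.1 (hM x hx)).2]⟩
  set m := sInf (u '' B) with hmdef
  set S := sSup (u '' B) with hSdef
  have hmle : ∀ x ∈ B, m ≤ u x := fun x hx => csInf_le hbb (Set.mem_image_of_mem _ hx)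
  have hSle : u w₀ ≤ S := le_csSup hba (Set.mem_image_of_mem _ hw₀)
  have hmw : m ≤ u w₀ := hmle _ hw₀
  -- volume facts
  have hV0 : (0:ENNReal) < volume B := measure_ball_pos _ _ hR
  have hVfin : volume B < ⊤ := measure_ball_lt_top
  set V := (volume B).toReal with hVdef
  have hVpos : 0 < V := ENNReal.toReal_pos hV0.ne' hVfin.ne
  -- μ B facts
  obtain ⟨hlow, hhigh⟩ := hμ B hBm subset_rfl
  have hμfin : μ B < ⊤ :=
    hhigh.trans_lt (by exact ENNReal.mul_lt_top ENNReal.ofReal_lt_top hVfin)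
  set Mμ := (μ B).toReal with hMμdef
  have hMμle : Mμ ≤ (1 + t) * V := by
    have := ENNReal.toReal_mono
      (by exact ENNReal.mul_ne_top ENNReal.ofReal_ne_top hVfin.ne) hhigh
    rwa [ENNReal.toReal_mul, ENNReal.toReal_ofReal (by linarith)] at this
  have hMμge : (1 - t) * V ≤ Mμ := by
    have := ENNReal.toReal_mono hμfin.ne hlow
    rwa [ENNReal.toReal_mul, ENNReal.toReal_ofReal ht1.le] at this
  have hMμpos : 0 < Mμ := lt_of_lt_of_le (by positivity) hMμge
  -- absolute continuity : volume.restrict B ≪ μ.restrict B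
  have hac : volume.restrict B ≪ μ.restrict B := by
    refine Measure.AbsolutelyContinuous.mk ?_
    intro s hs hs0
    rw [Measure.restrict_apply hs] at hs0 ⊢
    have h := (hμ (s ∩ B) (hs.inter hBm) Set.inter_subset_right).1
    rw [hs0] at h
    have : ENNReal.ofReal (1 - t) * volume (s ∩ B) = 0 := le_antisymm h zero_le
    rcases mul_eq_zero.1 this with h' | h'
    · exact absurd h' (by simp only [ENNReal.ofReal_eq_zero, not_le]; linarith)
    · exact h'
  -- integrability wrt volume on B
  have hmeasμ : AEStronglyMeasurable u (μ.restrict B) := hint.aestronglyMeasurable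
  have hmeasv : AEStronglyMeasurable u (volume.restrict B) := hmeasμ.mono_ac hac
  have hbdd_ae : ∀ᵐ x ∂(volume.restrict B), ‖u x‖ ≤ M :=
    ae_restrict_of_forall_mem hBm (fun x hx => by simpa using hM x hx)
  have hintvol : IntegrableOn u B volume := by
    refine Integrable.mono' (g := fun _ => M) ?_ hmeasv hbdd_ae
    exact (integrableOn_const_iff).2 (Or.inr hVfin)
  -- constants are integrable
  have hconstμ : IntegrableOn (fun _ => m) B μ := (integrableOn_const_iff).2 (Or.inr hμfin)
  have hconstv : IntegrableOn (fun _ => m) B volume := (integrableOn_const_iff).2 (Or.inr hVfin)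
  set Iμ := ∫ x in B, u x ∂μ with hIμdef
  set I := ∫ x in B, u x with hIdef
  set J := ∫ x in B, (u x - m) with hJdef
  -- sub-mean value at radius R
  have hsubR : u w₀ ≤ V⁻¹ * I := by
    have := hsub R hR le_rfl
    rwa [setAverage_eq, smul_eq_mul] at this
  have hI : V * u w₀ ≤ I := by
    rw [← mul_le_mul_iff_right₀ (inv_pos.2 hVpos), ← mul_assoc, inv_mul_cancel₀ hVpos.ne', one_mul]
    exact hsubR
  have hJeq : J = I - m * V := by
    rw [hJdef, hIdef, hVdef, integral_sub hintvol hconstv, integral_const,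
      measureReal_restrict_apply_univ, Measure.real, smul_eq_mul]
    ring
  have hJge : V * (u w₀ - m) ≤ J := by rw [hJeq]; linarith [hI]
  -- measure inequality and integral comparison
  have hmle' : (ENNReal.ofReal (1 - t)) • volume.restrict B ≤ μ.restrict B := by
    rw [Measure.le_iff]
    intro s hs
    rw [Measure.smul_apply, Measure.restrict_apply hs, Measure.restrict_apply hs, smul_eq_mul]
    exact (hμ (s ∩ B) (hs.inter hBm) Set.inter_subset_right).1
  have hgμ : Integrable (fun x => u x - m) (μ.restrict B) := hint.sub hconstμ
  have hgnn : 0 ≤ᵐ[μ.restrict B] fun x => u x - m :=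
    ae_restrict_of_forall_mem hBm (fun x hx => sub_nonneg.2 (hmle x hx))
  have hcomp : (1 - t) * J ≤ ∫ x in B, (u x - m) ∂μ := by
    have := integral_mono_measure hmle' hgnn hgμ
    rwa [integral_smul_measure, ENNReal.toReal_ofReal ht1.le, smul_eq_mul] at this
  have hIμeq : (∫ x in B, (u x - m) ∂μ) = Iμ - m * Mμ := by
    rw [hIμdef, hMμdef, integral_sub hint hconstμ, integral_const,
      measureReal_restrict_apply_univ, Measure.real, smul_eq_mul]
    ring
  have hIμge : m * Mμ + (1 - t) * (V * (u w₀ - m)) ≤ Iμ := by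
    have h1 : (1 - t) * (V * (u w₀ - m)) ≤ (1 - t) * J :=
      mul_le_mul_of_nonneg_left hJge ht1.le
    rw [hIμeq] at hcomp
    linarith
  -- conclude
  rw [ge_iff_le]
  have h4 : 4 * C * δ = 4 * t := by rw [htdef]; ring
  rw [h4, inv_mul_eq_div, le_div_iff₀ hMμpos]
  have ha : 0 ≤ u w₀ - m := by linarith
  have haS : u w₀ - m ≤ S - m := by linarith
  nlinarith [mul_le_mul_of_nonneg_left hMμle ha, mul_le_mul_of_nonneg_left hMμge ht0.le,
    mul_nonneg (mul_nonneg ht0.le (sub_nonneg.2 haS)) hMμpos.le,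
    mul_nonneg ht0.le (mul_nonneg ha hVpos.le),
    mul_le_mul_of_nonneg_left hMμge (mul_nonneg ht0.le ha),
    mul_le_mul_of_nonneg_right (mul_le_mul_of_nonneg_left haS ht0.le) hMμpos.le,
    mul_nonneg (mul_nonneg ht0.le ht0.le) (mul_nonneg ha hVpos.le)]
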